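/- Let f : ℝ^d → ℂ be continuous and h_1, ..., h_s ∈ ℝ^d be such that the subgroup H = h_1 ℤ + ... + h_s ℤ is dense in ℝ^d. If Δ_{h_k}^{m+1} f(x) = 0 for all x ∈ ℝ^d and all k = 1, ..., s, then Δ_h^{sm+1} f(x) = 0 for all x, h ∈ ℝ^d. -/

import Mathlib

open Finset

/-- Translation operator. -/
noncomputable def montelTau (d : ℕ) (u : Fin d → ℝ) : Module.End ℂ ((Fin d → ℝ) → ℂ) where
  toFun g := fun x => g (x + u)
  map_add' _ _ := rfl
  map_smul' _ _ := rfl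

lemma montelTau_apply (d : ℕ) (u : Fin d → ℝ) (g : (Fin d → ℝ) → ℂ) (x : Fin d → ℝ) :
    montelTau d u g x = g (x + u) := rfl

lemma montelTau_mul (d : ℕ) (u w : Fin d → ℝ) :
    montelTau d u * montelTau d w = montelTau d (u + w) :=
  LinearMap.ext fun g => funext fun x => by
    simp [Module.End.mul_apply, montelTau_apply, add_assoc]

lemma montelTau_zero (d : ℕ) : montelTau d 0 = 1 :=
  LinearMap.ext fun g => funext fun x => by simp [montelTau_apply]

lemma montelTau_comm (d : ℕ) (u w : Fin d → ℝ) : Commute (montelTau d u) (montelTau d w) := by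
  unfold Commute SemiconjBy
  rw [montelTau_mul, montelTau_mul, add_comm]

lemma montelTau_pow (d : ℕ) (u : Fin d → ℝ) (k : ℕ) :
    montelTau d u ^ k = montelTau d (k • u) := by
  induction k with
  | zero => simp [montelTau_zero]
  | succ k ih => rw [pow_succ, ih, montelTau_mul, succ_nsmul]

lemma montelKill (d : ℕ) (A B : Module.End ℂ ((Fin d → ℝ) → ℂ)) (f : (Fin d → ℝ) → ℂ)
    (hB : B f = 0) : (A * B) f = 0 := by
  rw [Module.End.mul_apply, hB, map_zero]

lemma montelNegOnePow (d : ℕ) (k : ℕ) (g : (Fin d → ℝ) → ℂ) :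
    ((-1 : Module.End ℂ ((Fin d → ℝ) → ℂ)) ^ k) g = (-1 : ℂ) ^ k • g := by
  induction k with
  | zero => simp
  | succ k ih =>
    rw [pow_succ, Module.End.mul_apply]
    simp only [pow_succ]
    rw [show ((-1 : Module.End ℂ ((Fin d → ℝ) → ℂ))) g = -g by simp, map_neg, ih]
    module

/-- Key binomial formula. -/
lemma montelFormula (d : ℕ) (f : (Fin d → ℝ) → ℂ) (u : Fin d → ℝ) (n : ℕ) (x : Fin d → ℝ) :
    ((montelTau d u - 1) ^ n) f x
      = ∑ j ∈ Finset.range (n + 1), (n.choose j : ℂ) * (-1) ^ (n - j) * f (x + j • u) := by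
  have hc : Commute (montelTau d u) (-1 : Module.End ℂ ((Fin d → ℝ) → ℂ)) :=
    Commute.neg_one_right (montelTau d u)
  rw [sub_eq_add_neg, hc.add_pow, LinearMap.sum_apply, Finset.sum_apply]
  refine Finset.sum_congr rfl fun j hj => ?_
  rw [Module.End.mul_apply, Module.End.mul_apply, Module.End.natCast_apply,
    ← Nat.cast_smul_eq_nsmul ℂ, map_smul, montelNegOnePow, map_smul, montelTau_pow]
  simp [montelTau_apply, mul_comm, mul_left_comm]
  ring

lemma montelLe (d : ℕ) (f : (Fin d → ℝ) → ℂ) (u : Fin d → ℝ) {a b : ℕ} (hab : a ≤ b)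
    (ha : ((montelTau d u - 1) ^ a) f = 0) : ((montelTau d u - 1) ^ b) f = 0 := by
  obtain ⟨c, rfl⟩ := Nat.exists_eq_add_of_le hab
  rw [add_comm a c, pow_add]
  exact montelKill _ _ _ _ ha

lemma montelAdd (d : ℕ) (f : (Fin d → ℝ) → ℂ) (u w : Fin d → ℝ) (a b : ℕ)
    (hu : ((montelTau d u - 1) ^ (a + 1)) f = 0)
    (hw : ((montelTau d w - 1) ^ (b + 1)) f = 0) :
    ((montelTau d (u + w) - 1) ^ (a + b + 1)) f = 0 := by
  have c1 : Commute (montelTau d u) (montelTau d w) := montelTau_comm d u w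
  have cX : Commute (montelTau d u - 1) (montelTau d w) := c1.sub_left (Commute.one_left _)
  have cUW : Commute (montelTau d u - 1) (montelTau d w - 1) :=
    (c1.sub_left (Commute.one_left _)).sub_right (Commute.one_right _)
  have cWY : Commute (montelTau d w) (montelTau d w - 1) :=
    (Commute.refl _).sub_right (Commute.one_right _)
  have key : montelTau d (u + w) - 1
      = (montelTau d u - 1) * montelTau d w + (montelTau d w - 1) := by
    rw [← montelTau_mul, sub_mul, one_mul]; abel
  have hXY : Commute ((montelTau d u - 1) * montelTau d w) (montelTau d w - 1) :=
    Commute.mul_left cUW cWY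
  rw [key, hXY.add_pow, LinearMap.sum_apply]
  refine Finset.sum_eq_zero fun j hj => ?_
  rw [Module.End.mul_apply, Module.End.natCast_apply, ← Nat.cast_smul_eq_nsmul ℂ, map_smul]
  suffices hz : (((montelTau d u - 1) * montelTau d w) ^ j
      * (montelTau d w - 1) ^ (a + b + 1 - j)) f = 0 by rw [hz, smul_zero]
  rcases le_or_gt j a with hja | hja
  · have hn : a + b + 1 - j = (a - j) + (b + 1) := by omega
    rw [hn, pow_add, ← mul_assoc]
    exact montelKill _ _ _ _ hw
  · have e1 : (montelTau d u - 1) ^ j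
        = (montelTau d u - 1) ^ (j - (a + 1)) * (montelTau d u - 1) ^ (a + 1) := by
      rw [← pow_add, Nat.sub_add_cancel (by omega)]
    have hc2 : Commute ((montelTau d u - 1) ^ (a + 1))
        (montelTau d w ^ j * (montelTau d w - 1) ^ (a + b + 1 - j)) :=
      Commute.mul_right (cX.pow_pow _ _) (cUW.pow_pow _ _)
    have hre : ((montelTau d u - 1) * montelTau d w) ^ j
          * (montelTau d w - 1) ^ (a + b + 1 - j)
        = (montelTau d u - 1) ^ (j - (a + 1))
            * (montelTau d w ^ j * (montelTau d w - 1) ^ (a + b + 1 - j))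
            * (montelTau d u - 1) ^ (a + 1) := by
      rw [cX.mul_pow, e1]
      calc (montelTau d u - 1) ^ (j - (a + 1)) * (montelTau d u - 1) ^ (a + 1)
            * montelTau d w ^ j * (montelTau d w - 1) ^ (a + b + 1 - j)
          = (montelTau d u - 1) ^ (j - (a + 1)) * ((montelTau d u - 1) ^ (a + 1)
              * (montelTau d w ^ j * (montelTau d w - 1) ^ (a + b + 1 - j))) := by
            rw [mul_assoc, mul_assoc]
        _ = (montelTau d u - 1) ^ (j - (a + 1))
              * ((montelTau d w ^ j * (montelTau d w - 1) ^ (a + b + 1 - j))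
                * (montelTau d u - 1) ^ (a + 1)) := by rw [hc2.eq]
        _ = _ := by rw [← mul_assoc]
    rw [hre]
    exact montelKill _ _ _ _ hu

lemma montelNsmul (d : ℕ) (f : (Fin d → ℝ) → ℂ) (u : Fin d → ℝ) (n0 k : ℕ)
    (hu : ((montelTau d u - 1) ^ n0) f = 0) :
    ((montelTau d (k • u) - 1) ^ n0) f = 0 := by
  have geo : montelTau d (k • u) - 1
      = (∑ i ∈ Finset.range k, montelTau d u ^ i) * (montelTau d u - 1) := by
    rw [← montelTau_pow]; exact (geom_sum_mul _ _).symm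
  have hcm : Commute (∑ i ∈ Finset.range k, montelTau d u ^ i) (montelTau d u - 1) :=
    Commute.sum_left _ _ _ fun i _ =>
      ((Commute.refl _).pow_left i).sub_right (Commute.one_right _)
  rw [geo, hcm.mul_pow]
  exact montelKill _ _ _ _ hu

lemma montelNeg (d : ℕ) (f : (Fin d → ℝ) → ℂ) (u : Fin d → ℝ) (n0 : ℕ)
    (hu : ((montelTau d u - 1) ^ n0) f = 0) :
    ((montelTau d (-u) - 1) ^ n0) f = 0 := by
  have h1 : montelTau d (-u) * montelTau d u = 1 := by
    rw [montelTau_mul, neg_add_cancel, montelTau_zero]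
  have key : (-(montelTau d (-u))) * (montelTau d u - 1) = montelTau d (-u) - 1 :=
    LinearMap.ext fun g => funext fun x => by
      simp [Module.End.mul_apply, LinearMap.sub_apply, LinearMap.neg_apply, montelTau_apply,
        add_assoc]
  have hcm : Commute (-(montelTau d (-u))) (montelTau d u - 1) :=
    ((montelTau_comm d (-u) u).sub_right (Commute.one_right _)).neg_left
  rw [← key, hcm.mul_pow]
  exact montelKill _ _ _ _ hu

lemma montelZsmul (d : ℕ) (f : (Fin d → ℝ) → ℂ) (u : Fin d → ℝ) (n0 : ℕ) (z : ℤ)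
    (hu : ((montelTau d u - 1) ^ n0) f = 0) :
    ((montelTau d (z • u) - 1) ^ n0) f = 0 := by
  rcases z with n | n
  · rw [Int.ofNat_eq_coe, natCast_zsmul]
    exact montelNsmul d f u n0 n hu
  · rw [negSucc_zsmul]
    exact montelNeg d f _ n0 (montelNsmul d f u n0 (n + 1) hu)

theorem montel_dense_subgroup (d m s : ℕ) (f : (Fin d → ℝ) → ℂ)
    (hcont : Continuous f) (h : Fin s → (Fin d → ℝ))
    (hdense : Dense ((AddSubgroup.closure (Set.range h) : AddSubgroup (Fin d → ℝ)) :
      Set (Fin d → ℝ)))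
    (hf : ∀ k : Fin s, ∀ x : Fin d → ℝ,
      ∑ j ∈ Finset.range (m + 2),
        ((m + 1).choose j : ℂ) * (-1) ^ (m + 1 - j) * f (x + j • h k) = 0) :
    ∀ x v : Fin d → ℝ,
      ∑ j ∈ Finset.range (s * m + 2),
        ((s * m + 1).choose j : ℂ) * (-1) ^ (s * m + 1 - j) * f (x + j • v) = 0 := by
  classical
  have hQgen : ∀ k : Fin s, ((montelTau d (h k) - 1) ^ (m + 1)) f = 0 := fun k =>
    funext fun x => by
      simp only [Pi.zero_apply]
      rw [montelFormula]
      exact hf k x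
  have hQsum : ∀ (c : Fin s → ℤ) (t : Finset (Fin s)),
      ((montelTau d (∑ k ∈ t, c k • h k) - 1) ^ (t.card * m + 1)) f = 0 := by
    intro c t
    induction t using Finset.induction_on with
    | empty =>
      simp only [Finset.sum_empty, Finset.card_empty, Nat.zero_mul, Nat.zero_add]
      rw [montelTau_zero, sub_self, pow_one]
      rfl
    | @insert a t ha ih =>
      rw [Finset.sum_insert ha, Finset.card_insert_of_notMem ha]
      have h1 : ((montelTau d (c a • h a) - 1) ^ (m + 1)) f = 0 :=
        montelZsmul d f (h a) (m + 1) (c a) (hQgen a)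
      have h2 := montelAdd d f (c a • h a) (∑ k ∈ t, c k • h k) m (t.card * m) h1 ih
      have hexp : (t.card + 1) * m + 1 = m + t.card * m + 1 := by ring
      rw [hexp]
      exact h2
  have hQclos : ∀ u ∈ AddSubgroup.closure (Set.range h),
      ((montelTau d u - 1) ^ (s * m + 1)) f = 0 := by
    intro u hu
    have hu' : u ∈ Submodule.span ℤ (Set.range h) := by
      rw [← Submodule.span_int_eq_addSubgroupClosure] at hu
      exact hu
    obtain ⟨c, rfl⟩ := (Submodule.mem_span_range_iff_exists_fun ℤ).1 hu'
    have := hQsum c Finset.univ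
    simpa [Finset.card_univ] using this
  intro x v
  have hg : Continuous (fun v : Fin d → ℝ => ∑ j ∈ Finset.range (s * m + 2),
      ((s * m + 1).choose j : ℂ) * (-1) ^ (s * m + 1 - j) * f (x + (j : ℝ) • v)) := by
    apply continuous_finset_sum
    intro j _
    exact continuous_const.mul (hcont.comp (continuous_const.add (continuous_const_smul (j : ℝ))))
  have heq : (fun v : Fin d → ℝ => ∑ j ∈ Finset.range (s * m + 2),
      ((s * m + 1).choose j : ℂ) * (-1) ^ (s * m + 1 - j) * f (x + (j : ℝ) • v))
      = fun _ => 0 := by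
    refine Continuous.ext_on hdense hg continuous_const ?_
    intro u hu
    have h0 := congrFun (hQclos u hu) x
    rw [montelFormula] at h0
    simp only [Pi.zero_apply] at h0
    simp only [← Nat.cast_smul_eq_nsmul ℝ] at h0
    exact h0
  have := congrFun heq v
  simp only [Nat.cast_smul_eq_nsmul] at this
  exact this
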